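/- Every finite connected simple graph G has, for every vertex r, a DFS tree rooted at r; that is, there exists a spanning tree T of G such that every edge of G joins two vertices that are comparable in (T,r). -/

import Mathlib

/-- `u` lies on the unique path in `T` from `r` to `v`
(characterized in a tree via distances). -/
def IsAncestor {V : Type*} (T : SimpleGraph V) (r u v : V) : Prop :=
  T.dist r u + T.dist u v = T.dist r v

/-- `u` and `v` are comparable in the rooted tree `(T, r)`:
one is an ancestor of the other. -/
def TreeComparable {V : Type*} (T : SimpleGraph V) (r u v : V) : Prop :=
  IsAncestor T r u v ∨ IsAncestor T r v u

/-- `(T, r)` is a DFS tree of `G`: `T` is a spanning tree of `G`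
and every edge of `G` joins two vertices comparable in `(T, r)`
(i.e. every edge is a back edge). -/
def IsDFSTree {V : Type*} (G T : SimpleGraph V) (r : V) : Prop :=
  T ≤ G ∧ T.IsTree ∧ ∀ u v : V, G.Adj u v → TreeComparable T r u v


open SimpleGraph

/-- A rooted parent/depth structure inside `G`. -/
def ParStruct {V : Type*} (G : SimpleGraph V) (r : V) (par : V → V) (d : V → ℕ) : Prop :=
  par r = r ∧ d r = 0 ∧ ∀ v, v ≠ r → G.Adj v (par v) ∧ d v = d (par v) + 1

section PartA

variable {V : Type*} {G : SimpleGraph V} {r : V} {par : V → V} {d : V → ℕ}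

/-- the tree determined by the parent function -/
def parTree (r : V) (par : V → V) : SimpleGraph V :=
  SimpleGraph.fromRel (fun x y => x ≠ r ∧ par x = y)

lemma parTree_adj {x y : V} :
    (parTree r par).Adj x y ↔ x ≠ y ∧ ((x ≠ r ∧ par x = y) ∨ (y ≠ r ∧ par y = x)) := by
  simp [parTree, fromRel_adj]

variable (h : ParStruct G r par d)
include h

lemma ps_le : parTree r par ≤ G := by
  intro x y hxy
  rw [parTree_adj] at hxy
  rcases hxy with ⟨hne, (⟨hx, hp⟩ | ⟨hy, hp⟩)⟩
  · exact hp ▸ (h.2.2 x hx).1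
  · exact (hp ▸ (h.2.2 y hy).1).symm

lemma ps_depth_succ {v : V} (hv : v ≠ r) : d v = d (par v) + 1 := (h.2.2 v hv).2

lemma ps_ne_par {v : V} (hv : v ≠ r) : v ≠ par v := by
  intro he
  have := ps_depth_succ h hv
  rw [← he] at this
  omega

lemma ps_adj_par {v : V} (hv : v ≠ r) : (parTree r par).Adj v (par v) := by
  rw [parTree_adj]
  refine ⟨?_, Or.inl ⟨hv, rfl⟩⟩
  intro he
  have := ps_depth_succ h hv
  rw [← he] at this; omega

lemma ps_d_par_le (v : V) : d (par v) ≤ d v := by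
  by_cases hv : v = r
  · subst hv; rw [h.1]
  · have := ps_depth_succ h hv; omega

lemma ps_d_iter_le (k : ℕ) (v : V) : d (par^[k] v) ≤ d v := by
  induction k generalizing v with
  | zero => simp
  | succ k ih =>
    rw [Function.iterate_succ_apply]
    exact le_trans (ih (par v)) (ps_d_par_le h v)

/-- walk from v up to the root, of length d v -/
lemma ps_walk_root : ∀ (n : ℕ) (v : V), d v ≤ n →
    ∃ p : (parTree r par).Walk v r, p.length = d v := by
  intro n
  induction n with
  | zero =>
    intro v hv
    by_cases hvr : v = r
    · subst hvr; exact ⟨.nil, by simp [h.2.1]⟩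
    · have := ps_depth_succ h hvr; omega
  | succ n ih =>
    intro v hv
    by_cases hvr : v = r
    · subst hvr; exact ⟨.nil, by simp [h.2.1]⟩
    · have hd := ps_depth_succ h hvr
      obtain ⟨q, hq⟩ := ih (par v) (by omega)
      exact ⟨.cons (ps_adj_par h hvr) q, by simp [hq, hd]⟩

lemma ps_connected [Nonempty V] : (parTree r par).Connected := by
  rw [connected_iff]
  refine ⟨fun x y => ?_, inferInstance⟩
  obtain ⟨p, _⟩ := ps_walk_root h (d x) x le_rfl
  obtain ⟨q, _⟩ := ps_walk_root h (d y) y le_rfl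
  exact p.reachable.trans q.reachable.symm

lemma ps_lipschitz : ∀ {a b : V} (p : (parTree r par).Walk a b),
    d b ≤ d a + p.length ∧ d a ≤ d b + p.length := by
  intro a b p
  induction p with
  | nil => simp
  | @cons a x b hax q ih =>
    rw [parTree_adj] at hax
    have hd : d a = d x + 1 ∨ d x = d a + 1 := by
      rcases hax.2 with ⟨hx, hp⟩ | ⟨hy, hp⟩
      · exact Or.inl (hp ▸ ps_depth_succ h hx)
      · exact Or.inr (hp ▸ ps_depth_succ h hy)
    simp only [Walk.length_cons]
    omega

lemma ps_dist_root [Nonempty V] (v : V) : (parTree r par).dist r v = d v := by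
  have hcon := ps_connected h
  obtain ⟨p, hp⟩ := ps_walk_root h (d v) v le_rfl
  have h1 : (parTree r par).dist r v ≤ d v := by
    have := SimpleGraph.dist_le p.reverse
    rwa [SimpleGraph.Walk.length_reverse, hp] at this
  have h2 : d v ≤ (parTree r par).dist r v := by
    obtain ⟨q, hq⟩ := hcon.exists_walk_length_eq_dist r v
    have := (ps_lipschitz h q).1
    rw [hq, h.2.1] at this; omega
  omega

lemma ps_walk_iter : ∀ (k : ℕ) (v u : V), par^[k] v = u →
    ∃ p : (parTree r par).Walk v u, p.length = d v - d u := by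
  intro k
  induction k with
  | zero =>
    intro v u hk
    simp only [Function.iterate_zero, id] at hk
    subst hk
    exact ⟨.nil, by simp⟩
  | succ k ih =>
    intro v u hk
    by_cases hvu : v = u
    · subst hvu; exact ⟨.nil, by simp⟩
    · have hvr : v ≠ r := by
        rintro rfl
        rw [Function.iterate_fixed h.1] at hk
        exact hvu hk
      rw [Function.iterate_succ_apply] at hk
      obtain ⟨q, hq⟩ := ih (par v) u hk
      refine ⟨.cons (ps_adj_par h hvr) q, ?_⟩
      have h1 : d u ≤ d (par v) := hk ▸ ps_d_iter_le h k (par v)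
      have h2 : d v = d (par v) + 1 := ps_depth_succ h hvr
      simp only [Walk.length_cons, hq]
      omega

lemma ps_ancestor [Nonempty V] {u v : V} (hk : ∃ k, par^[k] v = u) :
    IsAncestor (parTree r par) r u v := by
  obtain ⟨k, hk⟩ := hk
  have hcon := ps_connected h
  have hdu : d u ≤ d v := hk ▸ ps_d_iter_le h k v
  have hdist : (parTree r par).dist u v = d v - d u := by
    obtain ⟨p, hp⟩ := ps_walk_iter h k v u hk
    have h1 : (parTree r par).dist u v ≤ d v - d u := by
      have := SimpleGraph.dist_le p
      rwa [hp, SimpleGraph.dist_comm] at this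
    have h2 : d v - d u ≤ (parTree r par).dist u v := by
      obtain ⟨q, hq⟩ := hcon.exists_walk_length_eq_dist u v
      have := (ps_lipschitz h q).1
      rw [hq] at this; omega
    omega
  unfold IsAncestor
  rw [ps_dist_root h, ps_dist_root h, hdist]
  omega

lemma ps_acyclic : (parTree r par).IsAcyclic := by
  rw [isAcyclic_iff_forall_adj_isBridge]
  have key : ∀ x : V, x ≠ r →
      ¬((parTree r par) \ fromEdgeSet {s(x, par x)}).Reachable x (par x) := by
    intro x hx hreach
    set T' := (parTree r par) \ fromEdgeSet {s(x, par x)} with hT'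
    have closed : ∀ a b : V, T'.Adj a b → (∃ k, par^[k] a = x) → (∃ k, par^[k] b = x) := by
      intro a b hab ⟨k, hk⟩
      rw [hT', sdiff_adj, fromEdgeSet_adj] at hab
      obtain ⟨hab1, hab2⟩ := hab
      have hne : s(a, b) ≠ s(x, par x) := by
        intro he
        exact hab2 ⟨by simp [he], hab1.ne⟩
      rw [parTree_adj] at hab1
      rcases hab1.2 with ⟨har, hpa⟩ | ⟨hbr, hpb⟩
      · -- b = par a
        cases k with
        | zero =>
          simp only [Function.iterate_zero, id] at hk
          subst hk
          exact absurd (by rw [hpa]) hne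
        | succ k =>
          rw [Function.iterate_succ_apply] at hk
          exact ⟨k, by rwa [hpa] at hk⟩
      · -- a = par b
        exact ⟨k + 1, by rw [Function.iterate_succ_apply, hpb, hk]⟩
    have walk_closed : ∀ {a b : V} (p : T'.Walk a b), (∃ k, par^[k] a = x) → (∃ k, par^[k] b = x) := by
      intro a b p
      induction p with
      | nil => exact id
      | cons hadj q ih => exact fun ha => ih (closed _ _ hadj ha)
    obtain ⟨p⟩ := hreach
    obtain ⟨k, hk⟩ := walk_closed p ⟨0, rfl⟩
    have h1 : d (par^[k+1] x) ≤ d (par x) := by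
      rw [Function.iterate_succ_apply]
      exact ps_d_iter_le h k (par x)
    rw [Function.iterate_succ_apply, hk] at h1
    have := ps_depth_succ h hx
    omega
  intro v w hvw
  rw [parTree_adj] at hvw
  rcases hvw.2 with ⟨hvr, hp⟩ | ⟨hwr, hp⟩
  · rw [isBridge_iff]
    subst hp
    exact key v hvr
  · rw [Sym2.eq_swap, isBridge_iff]
    subst hp
    exact key w hwr

lemma ps_isDFSTree [Nonempty V]
    (hcomp : ∀ u v : V, G.Adj u v → (∃ k, par^[k] v = u) ∨ (∃ k, par^[k] u = v)) :
    IsDFSTree G (parTree r par) r := by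
  refine ⟨ps_le h, ⟨ps_connected h, ps_acyclic h⟩, fun u v huv => ?_⟩
  rcases hcomp u v huv with hk | hk
  · exact Or.inl (ps_ancestor h hk)
  · exact Or.inr (ps_ancestor h hk)

end PartA

section PartB

universe u

open SimpleGraph

/-- Full DFS data: a parent structure all of whose `G`-edges are comparable. -/
def DFSData {V : Type*} (G : SimpleGraph V) (r : V) (par : V → V) (d : V → ℕ) : Prop :=
  ParStruct G r par d ∧
    ∀ u v : V, G.Adj u v → (∃ k, par^[k] v = u) ∨ (∃ k, par^[k] u = v)

lemma ps_root_reach {V : Type*} {G : SimpleGraph V} {r : V} {par : V → V} {d : V → ℕ}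
    (h : ParStruct G r par d) : ∀ v : V, ∃ k, par^[k] v = r := by
  have key : ∀ (n : ℕ) (v : V), d v ≤ n → ∃ k, par^[k] v = r := by
    intro n
    induction n with
    | zero =>
      intro v hv
      by_cases hvr : v = r
      · exact ⟨0, hvr⟩
      · have := (h.2.2 v hvr).2; omega
    | succ n ih =>
      intro v hv
      by_cases hvr : v = r
      · exact ⟨0, hvr⟩
      · have hd := (h.2.2 v hvr).2
        obtain ⟨k, hk⟩ := ih (par v) (by omega)
        exact ⟨k + 1, by rw [Function.iterate_succ_apply, hk]⟩
  exact fun v => key (d v) v le_rfl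

/-- The graph obtained by removing `r`. -/
abbrev Gr {V : Type u} (G : SimpleGraph V) (r : V) : SimpleGraph {v : V // v ≠ r} :=
  G.comap Subtype.val

/-- The graph induced on a connected component of `Gr G r`. -/
abbrev Gc {V : Type u} (G : SimpleGraph V) (r : V) (c : (Gr G r).ConnectedComponent) :
    SimpleGraph c.supp :=
  (Gr G r).comap Subtype.val

open Classical in
/-- glued parent function on vertices other than `r`. -/
noncomputable def glueBody {V : Type u} (G : SimpleGraph V) (r : V)
    (W : ∀ c : (Gr G r).ConnectedComponent, c.supp)
    (P : ∀ c : (Gr G r).ConnectedComponent, c.supp → c.supp)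
    (v' : {v : V // v ≠ r}) : V :=
  if (⟨v', rfl⟩ : ((Gr G r).connectedComponentMk v').supp) = W _ then r
  else (P _ (⟨v', rfl⟩ : ((Gr G r).connectedComponentMk v').supp)).1.1

open Classical in
/-- glued parent function. -/
noncomputable def gluePar {V : Type u} (G : SimpleGraph V) (r : V)
    (W : ∀ c : (Gr G r).ConnectedComponent, c.supp)
    (P : ∀ c : (Gr G r).ConnectedComponent, c.supp → c.supp) : V → V := fun v =>
  if h : v = r then r else glueBody G r W P ⟨v, h⟩

open Classical in
/-- glued depth function. -/
noncomputable def glueD {V : Type u} (G : SimpleGraph V) (r : V)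
    (D : ∀ c : (Gr G r).ConnectedComponent, c.supp → ℕ) : V → ℕ := fun v =>
  if h : v = r then 0
  else D ((Gr G r).connectedComponentMk ⟨v, h⟩) ⟨⟨v, h⟩, rfl⟩ + 1

section GlueLemmas

variable {V : Type u} (G : SimpleGraph V) (r : V)
  (W : ∀ c : (Gr G r).ConnectedComponent, c.supp)
  (P : ∀ c : (Gr G r).ConnectedComponent, c.supp → c.supp)
  (D : ∀ c : (Gr G r).ConnectedComponent, c.supp → ℕ)

lemma gluePar_r : gluePar G r W P r = r := by simp [gluePar]

lemma glueD_r : glueD G r D r = 0 := by simp [glueD]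

lemma gluePar_eq_root {c : (Gr G r).ConnectedComponent} (x : c.supp) (hx : x = W c) :
    gluePar G r W P x.1.1 = r := by
  obtain ⟨⟨v, hv⟩, hxc⟩ := x
  have hc : (Gr G r).connectedComponentMk ⟨v, hv⟩ = c := hxc
  subst hc
  simp only [gluePar, glueBody, dif_neg hv]
  split
  · rfl
  · next hne => exact absurd hx hne

lemma gluePar_eq_P {c : (Gr G r).ConnectedComponent} (x : c.supp) (hx : x ≠ W c) :
    gluePar G r W P x.1.1 = (P c x).1.1 := by
  obtain ⟨⟨v, hv⟩, hxc⟩ := x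
  have hc : (Gr G r).connectedComponentMk ⟨v, hv⟩ = c := hxc
  subst hc
  simp only [gluePar, glueBody, dif_neg hv]
  split
  · next heq => exact absurd heq hx
  · rfl

lemma glueD_eq {c : (Gr G r).ConnectedComponent} (x : c.supp) :
    glueD G r D x.1.1 = D c x + 1 := by
  obtain ⟨⟨v, hv⟩, hxc⟩ := x
  have hc : (Gr G r).connectedComponentMk ⟨v, hv⟩ = c := hxc
  subst hc
  simp only [glueD, dif_neg hv]

lemma glue_dfsData
    (hW : ∀ c, G.Adj r (W c).1.1)
    (hd : ∀ c, DFSData (Gc G r c) (W c) (P c) (D c)) :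
    DFSData G r (gluePar G r W P) (glueD G r D) := by
  have hps : ParStruct G r (gluePar G r W P) (glueD G r D) := by
    refine ⟨gluePar_r G r W P, glueD_r G r D, fun v hv => ?_⟩
    set c := (Gr G r).connectedComponentMk ⟨v, hv⟩ with hc
    set x : c.supp := ⟨⟨v, hv⟩, rfl⟩ with hxdef
    by_cases hx : x = W c
    · have h1 : gluePar G r W P v = r := gluePar_eq_root G r W P x hx
      have h2 : glueD G r D v = D c x + 1 := glueD_eq G r D x
      have h3 : D c x = 0 := by rw [hx]; exact (hd c).1.2.1
      have hdr : glueD G r D r = 0 := glueD_r G r D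
      constructor
      · rw [h1]
        have h5 := hW c
        rw [← hx] at h5
        exact h5.symm
      · rw [h1, h2, h3, hdr]
    · have h1 : gluePar G r W P v = (P c x).1.1 := gluePar_eq_P G r W P x hx
      have h2 : glueD G r D v = D c x + 1 := glueD_eq G r D x
      have h3 : glueD G r D ((P c x).1.1) = D c (P c x) + 1 := glueD_eq G r D (P c x)
      have h4 : D c x = D c (P c x) + 1 := ((hd c).1.2.2 x hx).2
      constructor
      · rw [h1]
        exact ((hd c).1.2.2 x hx).1
      · rw [h1, h2, h3, h4]
  refine ⟨hps, ?_⟩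
  have lift_iter : ∀ (c : (Gr G r).ConnectedComponent) (k : ℕ) (x y : c.supp),
      (P c)^[k] x = y → ∃ m, (gluePar G r W P)^[m] x.1.1 = y.1.1 := by
    intro c k
    induction k with
    | zero =>
      intro x y hk
      simp only [Function.iterate_zero, id] at hk
      exact ⟨0, by simp [hk]⟩
    | succ k ih =>
      intro x y hk
      by_cases hxy : x = y
      · exact ⟨0, by simp [hxy]⟩
      · by_cases hxW : x = W c
        · exfalso
          have hfix : P c x = x := by rw [hxW]; exact (hd c).1.1
          rw [Function.iterate_fixed hfix] at hk
          exact hxy hk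
        · rw [Function.iterate_succ_apply] at hk
          obtain ⟨m, hm⟩ := ih (P c x) y hk
          refine ⟨m + 1, ?_⟩
          rw [Function.iterate_succ_apply, gluePar_eq_P G r W P x hxW, hm]
  intro u v huv
  by_cases hu : u = r
  · subst hu
    exact Or.inl (ps_root_reach hps v)
  by_cases hv : v = r
  · subst hv
    exact Or.inr (ps_root_reach hps u)
  · have hadj' : (Gr G r).Adj ⟨u, hu⟩ ⟨v, hv⟩ := huv
    set c := (Gr G r).connectedComponentMk ⟨u, hu⟩ with hc
    have hvc : (⟨v, hv⟩ : {v : V // v ≠ r}) ∈ c.supp :=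
      (ConnectedComponent.sound hadj'.reachable).symm
    set x : c.supp := ⟨⟨u, hu⟩, rfl⟩ with hxdef
    set y : c.supp := ⟨⟨v, hv⟩, hvc⟩ with hydef
    have hadj'' : (Gc G r c).Adj x y := hadj'
    rcases (hd c).2 x y hadj'' with ⟨k, hk⟩ | ⟨k, hk⟩
    · obtain ⟨m, hm⟩ := lift_iter c k y x hk
      exact Or.inl ⟨m, hm⟩
    · obtain ⟨m, hm⟩ := lift_iter c k x y hk
      exact Or.inr ⟨m, hm⟩

end GlueLemmas

lemma exists_dfsData : ∀ (n : ℕ) (V : Type u) [Fintype V] (G : SimpleGraph V),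
    Fintype.card V ≤ n → G.Connected → ∀ r : V, ∃ par d, DFSData G r par d := by
  intro n
  induction n with
  | zero =>
    intro V _ G hcard hG r
    have : Nonempty V := hG.nonempty
    have := Fintype.card_pos (α := V)
    omega
  | succ n ih =>
    intro V _ G hcard hG r
    classical
    have attach : ∀ v : {v : V // v ≠ r}, ∃ w : {v : V // v ≠ r},
        G.Adj r w.1 ∧ (Gr G r).Reachable v w := by
      have key : ∀ (a b : V) (p : G.Walk a b), b = r → ∀ (ha : a ≠ r),
          ∃ w : {v : V // v ≠ r}, G.Adj r w.1 ∧ (Gr G r).Reachable ⟨a, ha⟩ w := by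
        intro a b p
        induction p with
        | nil => intro hb ha; exact absurd hb ha
        | @cons a x b hadj q ihp =>
          intro hb ha
          by_cases hx : x = r
          · refine ⟨⟨a, ha⟩, ?_, Reachable.refl _⟩
            rw [hx] at hadj
            exact hadj.symm
          · obtain ⟨w, h1, h2⟩ := ihp hb hx
            have hadj2 : (Gr G r).Adj ⟨a, ha⟩ ⟨x, hx⟩ := hadj
            exact ⟨w, h1, hadj2.reachable.trans h2⟩
      intro v
      obtain ⟨p⟩ := hG.preconnected v.1 r
      exact key v.1 r p rfl v.2
    have pack : ∀ c : (Gr G r).ConnectedComponent, ∃ (w : c.supp),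
        G.Adj r w.1.1 ∧ ∃ par' d', DFSData (Gc G r c) w par' d' := by
      intro c
      obtain ⟨v₀, hv₀⟩ := c.exists_rep
      obtain ⟨w, hw1, hw2⟩ := attach v₀
      have hwc : w ∈ c.supp := by
        rw [ConnectedComponent.mem_supp_iff, ← hv₀]
        exact (ConnectedComponent.sound hw2).symm
      have walk_lift : ∀ (x y : {v : V // v ≠ r}) (p : (Gr G r).Walk x y)
          (hx : x ∈ c.supp) (hy : y ∈ c.supp),
          (Gc G r c).Reachable ⟨x, hx⟩ ⟨y, hy⟩ := by
        intro x y p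
        induction p with
        | nil => intro hx hy; exact Reachable.refl _
        | @cons a b z hadj q ihp =>
          intro hx hy
          have hb : b ∈ c.supp := by
            rw [ConnectedComponent.mem_supp_iff]
            rw [ConnectedComponent.mem_supp_iff] at hx
            rw [← hx]
            exact (ConnectedComponent.sound hadj.reachable).symm
          have hadj2 : (Gc G r c).Adj ⟨a, hx⟩ ⟨b, hb⟩ := hadj
          exact hadj2.reachable.trans (ihp hb hy)
      have hconn : (Gc G r c).Connected := by
        rw [connected_iff]
        refine ⟨fun a b => ?_, ⟨⟨w, hwc⟩⟩⟩
        obtain ⟨x, hx⟩ := a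
        obtain ⟨y, hy⟩ := b
        have : (Gr G r).Reachable x y := by
          rw [ConnectedComponent.mem_supp_iff] at hx hy
          exact ConnectedComponent.exact (hx.trans hy.symm)
        obtain ⟨p⟩ := this
        exact walk_lift x y p hx hy
      have hcardlt : Fintype.card c.supp ≤ n := by
        have h1 : Fintype.card {v : V // v ≠ r} < Fintype.card V :=
          Fintype.card_subtype_lt (x := r) (by simp)
        have h2 : Fintype.card c.supp ≤ Fintype.card {v : V // v ≠ r} :=
          Fintype.card_le_of_injective Subtype.val Subtype.val_injective
        omega
      obtain ⟨par', d', hdfs⟩ := ih c.supp (Gc G r c) hcardlt hconn ⟨w, hwc⟩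
      exact ⟨⟨w, hwc⟩, hw1, par', d', hdfs⟩
    choose W hW P D hdfs using pack
    exact ⟨gluePar G r W P, glueD G r D, glue_dfsData G r W P D hW hdfs⟩

end PartB


/-- Every finite connected simple graph `G` has, for every vertex `r`,
a DFS tree rooted at `r`. -/
theorem stmt0 {V : Type*} [Fintype V] (G : SimpleGraph V) (hG : G.Connected) (r : V) :
    ∃ T : SimpleGraph V, IsDFSTree G T r := by
  have : Nonempty V := hG.nonempty
  obtain ⟨par, d, hdfs⟩ := exists_dfsData (Fintype.card V) V G le_rfl hG r
  exact ⟨parTree r par, ps_isDFSTree hdfs.1 hdfs.2⟩
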